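/- Lower bound on shooting value: if u₀ < h·min_{t∈[0,T]} ∫₀ᵗ e^{-(r+δ)s}(P(X₀e^{-δs})-c) ds (a quantity that is ≤ 0 < α), then the solution of the forward system X' = -δX + (1/β)(u-α)⁺, u' = (r+δ)u - (P(X)-c)h starting from (X₀,u₀) satisfies u(t) < 0 for all t ∈ [0,T]; in particular u(T) < 0. -/

import Mathlib

open Set Real intervalIntegral

def IsForwardSol (δ β r h α c : ℝ) (P : ℝ → ℝ) (T : ℝ) (X u : ℝ → ℝ) : Prop :=
  ∀ t ∈ Set.Icc (0 : ℝ) T,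
    HasDerivAt X (-δ * X t + (1 / β) * max (u t - α) 0) t ∧
    HasDerivAt u ((r + δ) * u t - (P (X t) - c) * h) t

/-- If the initial costate lies strictly below
`h · min_{t∈[0,T]} ∫₀ᵗ e^{-(r+δ)s}(P(X₀e^{-δs})-c) ds`, then the costate stays
strictly negative on `[0,T]`; in particular `u(T) < 0`. -/
theorem stmt_6 (δ β r h T α c X₀ : ℝ) (hδ : 0 < δ) (hβ : 0 < β) (hr : 0 < r)
    (hh : 0 < h) (hT : 0 < T) (hα : 0 < α) (hX₀ : 0 ≤ X₀)
    (P : ℝ → ℝ) (hP : Continuous P) (hPmono : Antitone P)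
    (X u : ℝ → ℝ) (u₀ : ℝ)
    (hsol : IsForwardSol δ β r h α c P T X u)
    (hX0 : X 0 = X₀) (hu0 : u 0 = u₀)
    (hsmall : ∀ t ∈ Set.Icc (0 : ℝ) T,
      u₀ < h * ∫ s in (0:ℝ)..t,
        Real.exp (-(r + δ) * s) * (P (X₀ * Real.exp (-δ * s)) - c)) :
    (∀ t ∈ Set.Icc (0 : ℝ) T, u t < 0) ∧ u T < 0 := by
  have main : ∀ t ∈ Set.Icc (0 : ℝ) T, u t < 0 := by
    -- continuity of X and u on [0,T]
    have hXc : ContinuousOn X (Set.Icc 0 T) := fun t ht =>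
      (hsol t ht).1.continuousAt.continuousWithinAt
    have huc : ContinuousOn u (Set.Icc 0 T) := fun t ht =>
      (hsol t ht).2.continuousAt.continuousWithinAt
    have hu0neg : u 0 < 0 := by
      have := hsmall 0 ⟨le_refl 0, hT.le⟩
      simpa [hu0, intervalIntegral.integral_same] using this
    by_contra hcon
    push_neg at hcon
    obtain ⟨t₁, ht₁, hut₁⟩ := hcon
    -- the set where u ≥ 0
    set S : Set ℝ := {t ∈ Set.Icc (0:ℝ) T | 0 ≤ u t} with hS
    have hSsub : S ⊆ Set.Icc (0:ℝ) T := fun x hx => hx.1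
    have hSne : S.Nonempty := ⟨t₁, ht₁, hut₁⟩
    have hScomp : IsCompact S := by
      have hSeq : S = (Set.Icc (0:ℝ) T) ∩ u ⁻¹' (Set.Ici 0) := rfl
      have hclosed : IsClosed S := by
        rw [hSeq]
        exact huc.preimage_isClosed_of_isClosed isClosed_Icc isClosed_Ici
      exact isCompact_Icc.of_isClosed_subset hclosed hSsub
    set τ := sInf S with hτdef
    have hτS : τ ∈ S := hScomp.sInf_mem hSne
    have hτIcc : τ ∈ Set.Icc (0:ℝ) T := hSsub hτS
    have hτpos : 0 < τ := by
      rcases lt_or_eq_of_le hτIcc.1 with h0 | h0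
      · exact h0
      · exact absurd hτS.2 (by rw [← h0]; exact not_le.mpr hu0neg)
    -- u < 0 strictly before τ
    have hneg : ∀ s ∈ Set.Ico (0:ℝ) τ, u s < 0 := by
      intro s hs
      by_contra hcc
      push_neg at hcc
      have hsS : s ∈ S := ⟨⟨hs.1, hs.2.le.trans hτIcc.2⟩, hcc⟩
      exact absurd (csInf_le hScomp.bddBelow hsS) (not_le.mpr hs.2)
    -- u τ ≤ 0 by left continuity
    have huτle : u τ ≤ 0 := by
      have htend : Filter.Tendsto u (nhdsWithin τ (Set.Iio τ)) (nhds (u τ)) :=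
        ((hsol τ hτIcc).2.continuousAt).continuousWithinAt.tendsto
      refine le_of_tendsto htend ?_
      filter_upwards [Ico_mem_nhdsLT hτpos] with s hs
      exact (hneg s hs).le
    -- u < α on [0,τ]
    have huα : ∀ s ∈ Set.Icc (0:ℝ) τ, u s < α := by
      intro s hs
      rcases lt_or_eq_of_le hs.2 with h | h
      · exact (hneg s ⟨hs.1, h⟩).trans hα
      · rw [h]; exact lt_of_le_of_lt huτle hα
    have hsubτ : Set.Icc (0:ℝ) τ ⊆ Set.Icc (0:ℝ) T :=
      Set.Icc_subset_Icc le_rfl hτIcc.2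
    -- X t = X₀ e^{-δ t} on [0,τ]
    have hXeq : ∀ t ∈ Set.Icc (0:ℝ) τ, X t = X₀ * Real.exp (-δ * t) := by
      intro t ht
      have hyderiv : ∀ s ∈ Set.uIcc (0:ℝ) t,
          HasDerivAt (fun s => Real.exp (δ * s) * X s) 0 s := by
        intro s hs
        rw [Set.uIcc_of_le ht.1] at hs
        have hsτ : s ∈ Set.Icc (0:ℝ) τ := Set.Icc_subset_Icc le_rfl ht.2 hs
        have hXd := (hsol s (hsubτ hsτ)).1
        have hmax : max (u s - α) 0 = 0 := max_eq_right (by linarith [huα s hsτ])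
        have he : HasDerivAt (fun s => Real.exp (δ * s)) (δ * Real.exp (δ * s)) s := by
          simpa [mul_comm] using ((hasDerivAt_id s).const_mul δ).exp
        have := he.mul hXd
        refine this.congr_deriv ?_
        rw [hmax]; ring
      have hint : IntervalIntegrable (fun _ : ℝ => (0:ℝ)) MeasureTheory.volume 0 t :=
        intervalIntegrable_const
      have := intervalIntegral.integral_eq_sub_of_hasDerivAt hyderiv hint
      simp only [intervalIntegral.integral_zero] at this
      have h0 : Real.exp (δ * 0) * X 0 = X₀ := by simp [hX0]
      have ht' : Real.exp (δ * t) * X t = X₀ := by linarith [this]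
      have hexp : Real.exp (δ * t) ≠ 0 := (Real.exp_pos _).ne'
      rw [neg_mul, Real.exp_neg, eq_mul_inv_iff_mul_eq₀ hexp]
      linear_combination ht' 
    -- w t = e^{-(r+δ)t} u t ; FTC on [0,τ]
    have hwderiv : ∀ s ∈ Set.uIcc (0:ℝ) τ,
        HasDerivAt (fun s => Real.exp (-(r + δ) * s) * u s)
          (-(Real.exp (-(r + δ) * s) * ((P (X s) - c) * h))) s := by
      intro s hs
      rw [Set.uIcc_of_le hτpos.le] at hs
      have hud := (hsol s (hsubτ hs)).2
      have he : HasDerivAt (fun s => Real.exp (-(r + δ) * s))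
          (-(r + δ) * Real.exp (-(r + δ) * s)) s := by
        simpa [mul_comm] using ((hasDerivAt_id s).const_mul (-(r + δ))).exp
      have := he.mul hud
      refine this.congr_deriv ?_
      ring
    have hcontint : ContinuousOn (fun s => -(Real.exp (-(r + δ) * s) * ((P (X s) - c) * h)))
        (Set.uIcc (0:ℝ) τ) := by
      rw [Set.uIcc_of_le hτpos.le]
      exact (((Real.continuous_exp.comp (continuous_const.mul continuous_id)).continuousOn.mul
        (((hP.comp_continuousOn (hXc.mono hsubτ)).sub continuousOn_const).mul
          continuousOn_const))).neg
    have hint : IntervalIntegrable (fun s => -(Real.exp (-(r + δ) * s) * ((P (X s) - c) * h)))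
        MeasureTheory.volume 0 τ :=
      (by rwa [Set.uIcc_of_le hτpos.le] at hcontint : ContinuousOn _ (Set.Icc 0 τ)).intervalIntegrable_of_Icc hτpos.le
    have hFTC := intervalIntegral.integral_eq_sub_of_hasDerivAt hwderiv hint
    -- replace X by its explicit formula inside the integral
    have hcong : (∫ s in (0:ℝ)..τ, -(Real.exp (-(r + δ) * s) * ((P (X s) - c) * h)))
        = ∫ s in (0:ℝ)..τ, (-h) * (Real.exp (-(r + δ) * s) * (P (X₀ * Real.exp (-δ * s)) - c)) := by
      apply intervalIntegral.integral_congr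
      intro s hs
      rw [Set.uIcc_of_le hτpos.le] at hs
      simp only [hXeq s hs]
      ring
    rw [hcong, intervalIntegral.integral_const_mul] at hFTC
    have hw0 : Real.exp (-(r + δ) * 0) * u 0 = u₀ := by simp [hu0]
    have hwτ : Real.exp (-(r + δ) * τ) * u τ
        = u₀ + (-h) * ∫ s in (0:ℝ)..τ,
            Real.exp (-(r + δ) * s) * (P (X₀ * Real.exp (-δ * s)) - c) := by
      linarith [hFTC, hw0]
    have hlt := hsmall τ hτIcc
    have hwneg : Real.exp (-(r + δ) * τ) * u τ < 0 := by
      rw [hwτ]; linarith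
    have : (0:ℝ) ≤ Real.exp (-(r + δ) * τ) * u τ :=
      mul_nonneg (Real.exp_pos _).le hτS.2
    linarith
  exact ⟨main, main T ⟨hT.le, le_rfl⟩⟩
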